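/- Let h : ℝ^m → ℝ^m be a diffeomorphism and z ∈ ℝ^m. If C ⊆ ℝ^m is an open cone-like set of the form z + A·B, where A is an orthogonal transformation and B = {x : −s²·x_{k+1} < |x| < 1/s and s²|x_i| < |x| for k+1 < i ≤ m} for some s ≥ 1, then there exist t ≥ 1 and an orthogonal transformation A' such that h(z) + A'·B' ⊆ h(C), where B' is the set defined with parameter t in place of s. -/

import Mathlib

open Module

/-- The subspace of vectors supported on coordinates `≤ κ`. -/
noncomputable def Vsub (m : ℕ) (κ : Fin m) : Submodule ℝ (EuclideanSpace ℝ (Fin m)) where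
  carrier := {x | ∀ i : Fin m, (κ : ℕ) < (i : ℕ) → x i = 0}
  add_mem' := by intro a b ha hb i hi; simp only [PiLp.add_apply, ha i hi, hb i hi, add_zero]
  zero_mem' := by intro i hi; rfl
  smul_mem' := by intro c a ha i hi; simp only [PiLp.smul_apply, ha i hi, smul_zero]

noncomputable def genV (m : ℕ) (κ : Fin m) : Fin ((κ:ℕ)+1) → EuclideanSpace ℝ (Fin m) :=
  fun j => EuclideanSpace.single (Fin.castLE κ.isLt j) 1

lemma euclidean_sum_apply {n : ℕ} {α : Type*} (f : α → EuclideanSpace ℝ (Fin n))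
    (s : Finset α) (i : Fin n) : (∑ j ∈ s, f j) i = ∑ j ∈ s, f j i :=
  by rw [WithLp.ofLp_sum, Finset.sum_apply]

lemma sum_coord {m : ℕ} (κ : Fin m) (x : EuclideanSpace ℝ (Fin m)) (hx : x ∈ Vsub m κ) :
    x = ∑ j : Fin ((κ:ℕ)+1), x (Fin.castLE κ.isLt j) • genV m κ j := by
  ext i
  rw [euclidean_sum_apply]
  simp only [PiLp.smul_apply, smul_eq_mul, genV, EuclideanSpace.single_apply]
  by_cases hiκ : (i:ℕ) < (κ:ℕ)+1
  · rw [Finset.sum_eq_single ⟨(i:ℕ), hiκ⟩]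
    · rw [if_pos (by ext; simp), mul_one]
      have hc : Fin.castLE κ.isLt ⟨(i:ℕ), hiκ⟩ = i := by ext; simp
      rw [hc]
    · intro j _ hj
      rw [if_neg, mul_zero]
      intro hij
      apply hj
      ext
      simpa using congrArg Fin.val hij.symm
    · intro hmem; exact absurd (Finset.mem_univ _) hmem
  · rw [hx i (by omega)]
    symm
    apply Finset.sum_eq_zero
    intro j _
    rw [if_neg, mul_zero]
    intro hij
    have := congrArg Fin.val hij
    simp at this
    omega

lemma genV_orthonormal {m : ℕ} (κ : Fin m) : Orthonormal ℝ (genV m κ) := by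
  have h := (EuclideanSpace.basisFun (Fin m) ℝ).orthonormal
  have he : genV m κ = (EuclideanSpace.basisFun (Fin m) ℝ) ∘ (Fin.castLE κ.isLt) := by
    funext j; simp [genV, EuclideanSpace.basisFun_apply]
  rw [he]
  exact h.comp _ (Fin.castLE_injective _)

lemma genV_mem {m : ℕ} (κ : Fin m) (j : Fin ((κ:ℕ)+1)) : genV m κ j ∈ Vsub m κ := by
  intro i hi
  simp only [genV, EuclideanSpace.single_apply]
  rw [if_neg]
  intro hij
  subst hij
  simp only [Fin.coe_castLE] at hi
  omega

lemma Vsub_eq_span {m : ℕ} (κ : Fin m) :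
    Vsub m κ = Submodule.span ℝ (Set.range (genV m κ)) := by
  apply le_antisymm
  · intro x hx
    rw [sum_coord κ x hx]
    apply Submodule.sum_mem
    intro j _
    exact Submodule.smul_mem _ _ (Submodule.subset_span ⟨j, rfl⟩)
  · rw [Submodule.span_le]
    rintro _ ⟨j, rfl⟩
    exact genV_mem κ j

lemma Vsub_finrank (m : ℕ) (κ : Fin m) : finrank ℝ (Vsub m κ) = (κ:ℕ)+1 := by
  rw [Vsub_eq_span, finrank_span_eq_card (genV_orthonormal κ).linearIndependent]
  simp

lemma exists_adapted_onb (m : ℕ) (κ : Fin m) (W : Submodule ℝ (EuclideanSpace ℝ (Fin m)))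
    (cW : OrthonormalBasis (Fin ((κ:ℕ)+1)) ℝ W) :
    ∃ B : OrthonormalBasis (Fin m) ℝ (EuclideanSpace ℝ (Fin m)),
      ∀ i : Fin m, (hi : (i:ℕ) < (κ:ℕ)+1) → B i = (cW ⟨i, hi⟩ : EuclideanSpace ℝ (Fin m)) := by
  classical
  let v : Fin m → EuclideanSpace ℝ (Fin m) :=
    fun i => if hi : (i:ℕ) < (κ:ℕ)+1 then (cW ⟨i, hi⟩ : EuclideanSpace ℝ (Fin m)) else 0
  have hv : Orthonormal ℝ (({i : Fin m | (i:ℕ) < (κ:ℕ)+1}).restrict v) := by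
    constructor
    · rintro ⟨i, hi⟩
      have : ({i : Fin m | (i:ℕ) < (κ:ℕ)+1}).restrict v ⟨i, hi⟩
          = (cW ⟨i, hi⟩ : EuclideanSpace ℝ (Fin m)) := dif_pos hi
      rw [this, Submodule.norm_coe]
      exact cW.orthonormal.1 _
    · rintro ⟨i, hi⟩ ⟨j, hj⟩ hij
      have h1 : ({i : Fin m | (i:ℕ) < (κ:ℕ)+1}).restrict v ⟨i, hi⟩
          = (cW ⟨i, hi⟩ : EuclideanSpace ℝ (Fin m)) := dif_pos hi
      have h2 : ({i : Fin m | (i:ℕ) < (κ:ℕ)+1}).restrict v ⟨j, hj⟩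
          = (cW ⟨j, hj⟩ : EuclideanSpace ℝ (Fin m)) := dif_pos hj
      rw [h1, h2, ← Submodule.coe_inner]
      have hne : (⟨(i:ℕ), hi⟩ : Fin ((κ:ℕ)+1)) ≠ ⟨(j:ℕ), hj⟩ := by
        intro hcon
        apply hij
        apply Subtype.ext
        have hvv := congrArg Fin.val hcon
        exact Fin.ext hvv
      exact cW.orthonormal.2 hne
  have hcard2 : finrank ℝ (EuclideanSpace ℝ (Fin m)) = Fintype.card (Fin m) := by simp
  obtain ⟨B, hB⟩ := hv.exists_orthonormalBasis_extension_of_card_eq hcard2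
  refine ⟨B, fun i hi => ?_⟩
  rw [hB i hi]
  exact dif_pos hi

lemma exists_good_isometry (m : ℕ) (κ : Fin m)
    (Meq : (EuclideanSpace ℝ (Fin m)) ≃ₗ[ℝ] (EuclideanSpace ℝ (Fin m)))
    (M₀c : EuclideanSpace ℝ (Fin m) →L[ℝ] EuclideanSpace ℝ (Fin m))
    (hMc : ∀ x, M₀c x = Meq x) :
    ∃ A' : EuclideanSpace ℝ (Fin m) ≃ₗᵢ[ℝ] EuclideanSpace ℝ (Fin m), ∃ nn : ℝ, 0 ≤ nn ∧
      ∀ p ∈ Vsub m κ, Meq (A' p) ∈ Vsub m κ ∧ (Meq (A' p)) κ = nn * p κ := by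
  classical
  set W : Submodule ℝ (EuclideanSpace ℝ (Fin m)) :=
    (Vsub m κ).comap (Meq : EuclideanSpace ℝ (Fin m) →ₗ[ℝ] EuclideanSpace ℝ (Fin m)) with hWdef
  have hWrank : finrank ℝ W = (κ:ℕ)+1 := by
    rw [hWdef, Submodule.comap_equiv_eq_map_symm, LinearEquiv.finrank_map_eq]
    exact Vsub_finrank m κ
  set ν : EuclideanSpace ℝ (Fin m) :=
    (ContinuousLinearMap.adjoint M₀c) (EuclideanSpace.single κ 1) with hνdef
  have hν : ∀ w : EuclideanSpace ℝ (Fin m), (inner ℝ ν w : ℝ) = (M₀c w) κ := by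
    intro w
    rw [hνdef, ContinuousLinearMap.adjoint_inner_left, EuclideanSpace.inner_single_left]
    simp
  set n : EuclideanSpace ℝ (Fin m) := ((W.orthogonalProjectionOnto ν : ↥W) : EuclideanSpace ℝ (Fin m))
    with hndef
  have hnW : n ∈ W := SetLike.coe_mem _
  have hinner : ∀ w ∈ W, (inner ℝ w n : ℝ) = (M₀c w) κ := by
    intro w hw
    have horth : ν - n ∈ Wᗮ := W.sub_starProjection_mem_orthogonal ν
    have h0 : (inner ℝ w (ν - n) : ℝ) = 0 := Submodule.inner_right_of_mem_orthogonal hw horth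
    rw [inner_sub_right] at h0
    have heq : (inner ℝ w n : ℝ) = inner ℝ w ν := by linarith [h0]
    rw [heq, real_inner_comm, hν]
  have hn0 : n ≠ 0 := by
    intro hcon
    set w₀ := Meq.symm (EuclideanSpace.single κ 1) with hw₀def
    have hw₀ : w₀ ∈ W := by
      rw [hWdef, Submodule.mem_comap]
      intro i hi
      simp only [hw₀def, LinearEquiv.coe_coe, LinearEquiv.apply_symm_apply,
        EuclideanSpace.single_apply]
      rw [if_neg (by intro hik; subst hik; omega)]
    have h1 : (inner ℝ w₀ n : ℝ) = 1 := by
      rw [hinner w₀ hw₀, hMc]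
      simp only [hw₀def, LinearEquiv.apply_symm_apply, EuclideanSpace.single_apply, if_pos rfl]
      simp
    rw [hcon, inner_zero_right] at h1
    norm_num at h1
  set nn := ‖n‖ with hnndef
  have hnn : 0 < nn := norm_pos_iff.mpr hn0
  set nhatW : W := ⟨nn⁻¹ • n, W.smul_mem _ hnW⟩ with hnhatdef
  have hnhat : ‖nhatW‖ = 1 := by
    have : ‖nhatW‖ = ‖nn⁻¹ • n‖ := rfl
    rw [this, norm_smul]
    rw [norm_inv, Real.norm_eq_abs, abs_of_pos hnn]
    exact inv_mul_cancel₀ hnn.ne'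
  have hcard : finrank ℝ W = Fintype.card (Fin ((κ:ℕ)+1)) := by simp [hWrank]
  have hone : Orthonormal ℝ
      ((({Fin.last (κ:ℕ)} : Set (Fin ((κ:ℕ)+1)))).restrict (fun _ => nhatW)) := by
    constructor
    · intro i; exact hnhat
    · intro i j hij; exact absurd (Subsingleton.elim i j) hij
  obtain ⟨cW, hcW⟩ := hone.exists_orthonormalBasis_extension_of_card_eq hcard
  have hcWlast : cW (Fin.last _) = nhatW := hcW _ rfl
  obtain ⟨B, hB⟩ := exists_adapted_onb m κ W cW
  have hBmem : ∀ i : Fin m, (i:ℕ) < (κ:ℕ)+1 → B i ∈ W := by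
    intro i hi
    rw [hB i hi]
    exact SetLike.coe_mem _
  have hBκ : B κ = nn⁻¹ • n := by
    rw [hB κ (Nat.lt_succ_self _)]
    have : (⟨(κ:ℕ), Nat.lt_succ_self _⟩ : Fin ((κ:ℕ)+1)) = Fin.last _ := by
      ext; simp
    rw [this, hcWlast]
  refine ⟨B.repr.symm, nn, le_of_lt hnn, ?_⟩
  intro p hp
  have hA'W : B.repr.symm p ∈ W := by
    rw [← B.sum_repr_symm]
    apply Submodule.sum_mem
    intro i _
    by_cases hi : (i:ℕ) < (κ:ℕ)+1
    · exact W.smul_mem _ (hBmem i hi)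
    · rw [hp i (by omega), zero_smul]; exact W.zero_mem
  refine ⟨Submodule.mem_comap.mp hA'W, ?_⟩
  have h1 : (inner ℝ (B.repr.symm p) n : ℝ) = (M₀c (B.repr.symm p)) κ := hinner _ hA'W
  have hn_eq : n = nn • B κ := by
    rw [hBκ, smul_smul, mul_inv_cancel₀ hnn.ne', one_smul]
  have h2 : (inner ℝ (B.repr.symm p) n : ℝ) = nn * p κ := by
    rw [hn_eq, real_inner_smul_right, real_inner_comm, ← B.repr_apply_apply,
      LinearIsometryEquiv.apply_symm_apply]
  rw [← hMc, ← h1, h2]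

lemma coord_abs_le_norm {m : ℕ} (x : EuclideanSpace ℝ (Fin m)) (i : Fin m) : |x i| ≤ ‖x‖ := by
  have h1 : ‖x‖ = Real.sqrt (∑ j, ‖x j‖ ^ 2) := EuclideanSpace.norm_eq x
  have h2 : |x i| = Real.sqrt (‖x i‖ ^ 2) := by rw [Real.sqrt_sq_eq_abs]; simp
  rw [h1, h2]
  apply Real.sqrt_le_sqrt
  exact Finset.single_le_sum (f := fun j => ‖x j‖^2) (fun j _ => by positivity) (Finset.mem_univ i)

/-- The open cone `B^{k+1}_s = {x ∈ ℝ^m : -s² x_{k+1} < |x| < 1/s and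
s²|x_i| < |x| for k+1 < i ≤ m}`; here the coordinate `x_{k+1}` is indexed by
`κ : Fin m` (0-based, `κ.val = k`). -/
def coneSet (m : ℕ) (κ : Fin m) (s : ℝ) : Set (EuclideanSpace ℝ (Fin m)) :=
  {x | -s ^ 2 * x κ < ‖x‖ ∧ ‖x‖ < 1 / s ∧
    ∀ i : Fin m, (κ : ℕ) < (i : ℕ) → s ^ 2 * |x i| < ‖x‖}

/-- The image under a diffeomorphism `h` of a cone of type `z + A·B^{k+1}_s`
contains a (possibly thinner and shorter) cone of the same type with vertex
`h z`. -/
theorem diffeo_image_contains_cone (m : ℕ) (κ : Fin m)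
    (h g : EuclideanSpace ℝ (Fin m) → EuclideanSpace ℝ (Fin m))
    (hinv : ∀ a, g (h a) = a) (hinv' : ∀ a, h (g a) = a)
    (hdiff : Differentiable ℝ h) (gdiff : Differentiable ℝ g)
    (z : EuclideanSpace ℝ (Fin m)) (s : ℝ) (hs : 1 ≤ s)
    (A : EuclideanSpace ℝ (Fin m) ≃ₗᵢ[ℝ] EuclideanSpace ℝ (Fin m)) :
    ∃ t : ℝ, 1 ≤ t ∧
      ∃ A' : EuclideanSpace ℝ (Fin m) ≃ₗᵢ[ℝ] EuclideanSpace ℝ (Fin m),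
        (fun w => h z + A' w) '' coneSet m κ t ⊆
          h '' ((fun w => z + A w) '' coneSet m κ s) := by
  classical
  have hgz : g (h z) = z := hinv z
  set D : EuclideanSpace ℝ (Fin m) →L[ℝ] EuclideanSpace ℝ (Fin m) := fderiv ℝ g (h z) with hDdef
  set Dh : EuclideanSpace ℝ (Fin m) →L[ℝ] EuclideanSpace ℝ (Fin m) := fderiv ℝ h z with hDhdef
  have hDDh : D.comp Dh = ContinuousLinearMap.id ℝ _ := by
    have h1 : HasFDerivAt (g ∘ h) (D.comp Dh) z :=
      ((gdiff (h z)).hasFDerivAt).comp z (hdiff z).hasFDerivAt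
    have h2 : g ∘ h = id := funext hinv
    rw [h2] at h1
    exact h1.unique (hasFDerivAt_id z)
  have hDhD : Dh.comp D = ContinuousLinearMap.id ℝ _ := by
    have h1 : HasFDerivAt (h ∘ g) ((fderiv ℝ h (g (h z))).comp D) (h z) :=
      ((hdiff (g (h z))).hasFDerivAt).comp (h z) (gdiff (h z)).hasFDerivAt
    rw [hgz] at h1
    have h2 : h ∘ g = id := funext hinv'
    rw [h2] at h1
    exact h1.unique (hasFDerivAt_id (h z))
  have hDDh' : ∀ x, D (Dh x) = x := fun x => congrArg (fun f => f x) hDDh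
  have hDhD' : ∀ x, Dh (D x) = x := fun x => congrArg (fun f => f x) hDhD
  -- the invertible linear map `M₀ = A.symm ∘ D` and its isometry correction `A'`
  set Meq : EuclideanSpace ℝ (Fin m) ≃ₗ[ℝ] EuclideanSpace ℝ (Fin m) :=
    LinearEquiv.ofLinear
      (A.symm.toLinearEquiv.toLinearMap ∘ₗ
        (D : EuclideanSpace ℝ (Fin m) →ₗ[ℝ] EuclideanSpace ℝ (Fin m)))
      ((Dh : EuclideanSpace ℝ (Fin m) →ₗ[ℝ] EuclideanSpace ℝ (Fin m)) ∘ₗ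
        A.toLinearEquiv.toLinearMap)
      (by ext x; simp [hDDh']) (by ext x; simp [hDhD']) with hMeqdef
  set M₀c : EuclideanSpace ℝ (Fin m) →L[ℝ] EuclideanSpace ℝ (Fin m) :=
    (A.symm.toLinearIsometry.toContinuousLinearMap).comp D with hM₀cdef
  have hMc : ∀ x, M₀c x = Meq x := fun x => rfl
  obtain ⟨A', nn, hnn, hA'⟩ := exists_good_isometry m κ Meq M₀c hMc
  set NA : EuclideanSpace ℝ (Fin m) → EuclideanSpace ℝ (Fin m) :=
    fun a => A.symm (D (A' a)) with hNAdef
  have hNA_eq : ∀ a, NA a = Meq (A' a) := fun a => rfl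
  clear_value Meq M₀c
  -- constants
  set Kh := max ‖Dh‖ 1 with hKhdef
  have hKh : 0 < Kh := lt_of_lt_of_le one_pos (le_max_right _ _)
  have hKhb : ∀ x, ‖x‖ ≤ Kh * ‖D x‖ := by
    intro x
    calc ‖x‖ = ‖Dh (D x)‖ := by rw [hDhD']
    _ ≤ ‖Dh‖ * ‖D x‖ := Dh.le_opNorm _
    _ ≤ Kh * ‖D x‖ := mul_le_mul_of_nonneg_right (le_max_left _ _) (norm_nonneg _)
  clear_value Kh
  set Kn := max ‖D‖ 1 with hKndef
  have hKn : 0 < Kn := lt_of_lt_of_le one_pos (le_max_right _ _)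
  have hKnb : ∀ x, ‖D x‖ ≤ Kn * ‖x‖ := fun x =>
    le_trans (D.le_opNorm x) (mul_le_mul_of_nonneg_right (le_max_left _ _) (norm_nonneg _))
  clear_value Kn
  have hs0 : 0 < s := lt_of_lt_of_le one_pos hs
  set ρ := Kh⁻¹ with hρdef
  have hρ : 0 < ρ := inv_pos.mpr hKh
  have hρKh : ∀ x, ρ * ‖x‖ ≤ ‖D x‖ := by
    intro x
    have h1 := hKhb x
    rw [hρdef, inv_mul_le_iff₀ hKh]
    linarith only [h1, mul_le_mul_of_nonneg_right (le_refl Kh) (norm_nonneg (D x))]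
  clear_value ρ
  have hden : (0:ℝ) < 2*(s^2+1) := by positivity
  set ε := ρ / (2*(s^2+1)) with hεdef
  have hε : 0 < ε := div_pos hρ hden
  have hερ : ε * (2*(s^2+1)) = ρ := by
    rw [hεdef]; field_simp
  clear_value ε
  set δ := ε/2 with hδdef
  have hδ : 0 < δ := by rw [hδdef]; exact half_pos hε
  clear_value δ
  -- little-o estimate for g at h z
  have hlo := hasFDerivAt_iff_isLittleO_nhds_zero.mp (gdiff (h z)).hasFDerivAt
  have hev := Asymptotics.isLittleO_iff.mp hlo hδ
  rw [Metric.eventually_nhds_iff] at hev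
  obtain ⟨r, hr, herr⟩ := hev
  set em := Real.sqrt m with hemdef
  have hem0 : 0 ≤ em := Real.sqrt_nonneg _
  have hemsq : (m : ℝ) = em^2 := (Real.sq_sqrt (Nat.cast_nonneg m)).symm
  clear_value em
  set t := 1 + s*(Kn + δ + 1) + 1/r + 2*Kn*em/ε with htdef
  have haux1 : 0 ≤ s*(Kn + δ + 1) :=
    mul_nonneg hs0.le (by linarith only [hKn, hδ])
  have haux2 : 0 < 1/r := one_div_pos.mpr hr
  have haux3 : 0 ≤ 2*Kn*em/ε :=
    div_nonneg (mul_nonneg (mul_nonneg (by norm_num) hKn.le) hem0) hε.le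
  have ht1 : 1 ≤ t := by rw [htdef]; linarith only [haux1, haux2, haux3]
  have ht0 : 0 < t := lt_of_lt_of_le one_pos ht1
  have htr : 1/r ≤ t := by rw [htdef]; linarith only [haux1, haux3]
  have ht2 : 2*Kn*em/ε ≤ t := by rw [htdef]; linarith only [haux1, haux2]
  have hts : s*(Kn + δ + 1) ≤ t := by rw [htdef]; linarith only [haux2, haux3]
  clear_value t
  have htsq0 : (0:ℝ) < t^2 := pow_pos ht0 2
  have h1t2 : (0:ℝ) ≤ 1/t^2 := le_of_lt (one_div_pos.mpr htsq0)
  refine ⟨t, ht1, A', ?_⟩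
  rintro xx ⟨y, hy, rfl⟩
  obtain ⟨hy1, hy2, hy3⟩ := hy
  have hyne : y ≠ 0 := by
    intro h0
    rw [h0] at hy1
    simp at hy1
  have hy0 : 0 < ‖y‖ := norm_pos_iff.mpr hyne
  set w : EuclideanSpace ℝ (Fin m) := A' y with hwdef
  have hwnorm : ‖w‖ = ‖y‖ := A'.norm_map y
  set q : EuclideanSpace ℝ (Fin m) := g (h z + w) - z with hqdef
  set x : EuclideanSpace ℝ (Fin m) := A.symm q with hxdef
  have himg : h (z + A x) = h z + A' y := by
    have hzx : z + A x = g (h z + w) := by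
      rw [hxdef, A.apply_symm_apply, hqdef]
      abel
    rw [hzx, hwdef, hinv']
  refine ⟨z + A x, ⟨x, ?_, rfl⟩, himg⟩
  -- error bound
  have hwr : dist w 0 < r := by
    rw [dist_zero_right, hwnorm]
    have h1t : 1/t ≤ r := by
      rw [div_le_iff₀ ht0]
      calc (1:ℝ) = r * (1/r) := by field_simp
      _ ≤ r * t := mul_le_mul_of_nonneg_left htr (le_of_lt hr)
    linarith only [hy2, h1t]
  have herr2 : ‖g (h z + w) - g (h z) - D w‖ ≤ δ * ‖y‖ := by
    rw [← hwnorm]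
    exact herr hwr
  have hqD : q - D w = g (h z + w) - g (h z) - D w := by
    rw [hqdef, hgz]
  have hx_err : ‖x - NA y‖ ≤ δ * ‖y‖ := by
    have heq : x - NA y = A.symm (q - D w) := by
      rw [hxdef, hNAdef, ← map_sub, hwdef]
    rw [heq, A.symm.norm_map, hqD]
    exact herr2
  -- unit direction and its hemisphere approximation
  set u' : EuclideanSpace ℝ (Fin m) := ‖y‖⁻¹ • y with hu'def
  have hu'norm : ‖u'‖ = 1 := by
    rw [hu'def, norm_smul, norm_inv, norm_norm, inv_mul_cancel₀ hy0.ne']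
  have hu'i : ∀ i, u' i = ‖y‖⁻¹ * y i := fun i => rfl
  set p : EuclideanSpace ℝ (Fin m) := (WithLp.equiv 2 _).symm
    (fun i => if (i:ℕ) < (κ:ℕ) then u' i else if i = κ then max (u' κ) 0 else 0) with hpdef
  have hp_apply : ∀ i, p i = if (i:ℕ) < (κ:ℕ) then u' i else if i = κ then max (u' κ) 0 else 0 :=
    fun i => rfl
  clear_value p
  have hpV : p ∈ Vsub m κ := by
    intro i hi
    rw [hp_apply, if_neg (by omega), if_neg (by intro hcon; subst hcon; omega)]
  have hpκ : p κ = max (u' κ) 0 := by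
    rw [hp_apply, if_neg (lt_irrefl _), if_pos rfl]
  have hcoordbd : ∀ i, |u' i - p i| ≤ 1/t^2 := by
    intro i
    rcases lt_trichotomy ((i:ℕ)) ((κ:ℕ)) with hlt | heq | hgt
    · rw [hp_apply, if_pos hlt, sub_self, abs_zero]
      exact h1t2
    · have hiκ : i = κ := Fin.ext heq
      subst hiκ
      rw [hp_apply, if_neg (lt_irrefl _), if_pos rfl]
      rcases le_or_gt 0 (u' i) with hpos | hneg
      · rw [max_eq_left hpos, sub_self, abs_zero]
        exact h1t2
      · rw [max_eq_right hneg.le, sub_zero, abs_of_neg hneg]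
        have hyi : -y i * t^2 < ‖y‖ := by linarith only [hy1]
        rw [hu'i]
        have hre : -(‖y‖⁻¹ * y i) = ‖y‖⁻¹ * (-y i) := by ring
        rw [hre, le_div_iff₀ htsq0]
        calc ‖y‖⁻¹ * -y i * t^2 = ‖y‖⁻¹ * (-y i * t^2) := by ring
        _ ≤ ‖y‖⁻¹ * ‖y‖ := mul_le_mul_of_nonneg_left (le_of_lt hyi) (by positivity)
        _ = 1 := inv_mul_cancel₀ hy0.ne'
    · rw [hp_apply, if_neg (by omega), if_neg (by intro hcon; subst hcon; omega), sub_zero, hu'i]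
      have hyi : t^2 * |y i| < ‖y‖ := hy3 i hgt
      rw [abs_mul, abs_inv, abs_norm, le_div_iff₀ htsq0]
      calc ‖y‖⁻¹ * |y i| * t^2 = ‖y‖⁻¹ * (t^2 * |y i|) := by ring
      _ ≤ ‖y‖⁻¹ * ‖y‖ := mul_le_mul_of_nonneg_left (le_of_lt hyi) (by positivity)
      _ = 1 := inv_mul_cancel₀ hy0.ne'
  have hupbd : ‖u' - p‖ ≤ em / t^2 := by
    rw [EuclideanSpace.norm_eq]
    have hsumbd : (∑ i, ‖(u' - p) i‖ ^ 2) ≤ (m : ℝ) * (1/t^2)^2 := by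
      calc (∑ i, ‖(u' - p) i‖ ^ 2) ≤ ∑ _i : Fin m, (1/t^2)^2 := by
            apply Finset.sum_le_sum
            intro i _
            have hni : ‖(u' - p) i‖ = |u' i - p i| := by rw [PiLp.sub_apply]; rfl
            rw [hni]
            exact pow_le_pow_left₀ (abs_nonneg _) (hcoordbd i) 2
      _ = (m : ℝ) * (1/t^2)^2 := by rw [Finset.sum_const]; simp [mul_comm]
    calc Real.sqrt (∑ i, ‖(u' - p) i‖ ^ 2) ≤ Real.sqrt ((m : ℝ) * (1/t^2)^2) :=
          Real.sqrt_le_sqrt hsumbd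
    _ = em * (1/t^2) := by
        rw [hemsq, Real.sqrt_mul (sq_nonneg em), Real.sqrt_sq h1t2,
          Real.sqrt_sq hem0]
    _ = em / t^2 := by ring
  -- the renormalized image point and its bounds
  set v : EuclideanSpace ℝ (Fin m) := ‖y‖⁻¹ • x with hvdef
  have hNAy : NA u' = ‖y‖⁻¹ • NA y := by
    rw [hNAdef, hu'def]
    simp only [map_smul]
  have hv_err : ‖v - NA u'‖ ≤ δ := by
    have heq : v - NA u' = ‖y‖⁻¹ • (x - NA y) := by
      rw [hvdef, hNAy, smul_sub]
    rw [heq, norm_smul, norm_inv, norm_norm]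
    calc ‖y‖⁻¹ * ‖x - NA y‖ ≤ ‖y‖⁻¹ * (δ * ‖y‖) :=
          mul_le_mul_of_nonneg_left hx_err (by positivity)
    _ = δ := by field_simp
  have hNAdir : ‖NA u' - NA p‖ ≤ Kn * (em/t^2) := by
    have heq : NA u' - NA p = A.symm (D (A' (u' - p))) := by
      rw [hNAdef]
      simp only [map_sub]
    rw [heq, A.symm.norm_map]
    calc ‖D (A' (u' - p))‖ ≤ Kn * ‖A' (u' - p)‖ := hKnb _
    _ = Kn * ‖u' - p‖ := by rw [A'.norm_map]
    _ ≤ Kn * (em/t^2) := mul_le_mul_of_nonneg_left hupbd (le_of_lt hKn)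
  have hcb : δ + Kn * (em/t^2) ≤ ε := by
    have htsq : t ≤ t^2 := by nlinarith only [ht1, ht0]
    have h1 : Kn * (em/t^2) ≤ ε/2 := by
      rw [div_le_iff₀ hε] at ht2
      have hque : ε * t ≤ ε * t^2 := mul_le_mul_of_nonneg_left htsq hε.le
      rw [← mul_div_assoc, div_le_iff₀ htsq0]
      calc Kn * em ≤ ε * t / 2 := by linarith only [ht2]
      _ ≤ ε * t^2 / 2 := by linarith only [hque]
      _ = ε/2 * t^2 := by ring
    have hδε2 : δ = ε/2 := hδdef
    linarith only [h1, hδε2]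
  have hvNp : ‖v - NA p‖ ≤ ε := by
    calc ‖v - NA p‖ ≤ ‖v - NA u'‖ + ‖NA u' - NA p‖ := by
          have habel : v - NA p = (v - NA u') + (NA u' - NA p) := by abel
          rw [habel]; exact norm_add_le _ _
    _ ≤ δ + Kn * (em/t^2) := add_le_add hv_err hNAdir
    _ ≤ ε := hcb
  obtain ⟨hNpV, hNpκ⟩ := hA' p hpV
  have hNApV : ∀ i : Fin m, (κ:ℕ) < (i:ℕ) → (NA p) i = 0 := by
    intro i hi
    rw [hNA_eq]
    exact hNpV i hi
  have hNApκ0 : 0 ≤ (NA p) κ := by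
    rw [hNA_eq, hNpκ, hpκ]
    exact mul_nonneg hnn (le_max_right _ _)
  -- coordinate bounds on v
  have hvκ : -(v κ) ≤ ε := by
    have hco := coord_abs_le_norm (v - NA p) κ
    rw [PiLp.sub_apply] at hco
    have habs := abs_le.mp (le_trans hco hvNp)
    linarith only [habs.1, hNApκ0]
  have hvi : ∀ i : Fin m, (κ:ℕ) < (i:ℕ) → |v i| ≤ ε := by
    intro i hi
    have hco := coord_abs_le_norm (v - NA p) i
    rw [PiLp.sub_apply] at hco
    rw [hNApV i hi, sub_zero] at hco
    exact le_trans hco hvNp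
  have hvnorm : ρ - ε ≤ ‖v‖ := by
    have hNu' : ρ ≤ ‖NA u'‖ := by
      have hb : ‖NA u'‖ = ‖D (A' u')‖ := by rw [hNAdef, A.symm.norm_map]
      have hρb := hρKh (A' u')
      rw [A'.norm_map, hu'norm, mul_one] at hρb
      rw [hb]
      exact hρb
    have hns := norm_sub_norm_le (NA u') v
    rw [norm_sub_rev] at hns
    have hδε : δ ≤ ε := by rw [hδdef]; linarith only [hε]
    linarith only [hv_err, hns, hNu', hδε]
  have hsε : s^2 * ε < ‖v‖ := by
    nlinarith only [hvnorm, hερ, hε, mul_nonneg (sq_nonneg s) hε.le]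
  -- conclude
  have hxv : x = ‖y‖ • v := by
    rw [hvdef, smul_smul, mul_inv_cancel₀ hy0.ne', one_smul]
  have hxnorm : ‖x‖ = ‖y‖ * ‖v‖ := by rw [hxv, norm_smul, norm_norm]
  have hxi : ∀ i, x i = ‖y‖ * v i := by
    intro i
    rw [hxv, PiLp.smul_apply, smul_eq_mul]
  refine ⟨?_, ?_, ?_⟩
  · rw [hxi κ, hxnorm]
    nlinarith only [mul_lt_mul_of_pos_left hsε hy0, mul_le_mul_of_nonneg_left hvκ hy0.le,
      sq_nonneg s, hy0.le]
  · have hNAyb : ‖NA y‖ ≤ Kn * ‖y‖ := by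
      have hb : ‖NA y‖ = ‖D (A' y)‖ := by rw [hNAdef, A.symm.norm_map]
      rw [hb]
      calc ‖D (A' y)‖ ≤ Kn * ‖A' y‖ := hKnb _
      _ = Kn * ‖y‖ := by rw [A'.norm_map]
    have h1 : ‖x‖ ≤ (Kn + δ) * ‖y‖ := by
      calc ‖x‖ ≤ ‖x - NA y‖ + ‖NA y‖ := by
            have habel : x = (x - NA y) + NA y := by abel
            nth_rewrite 1 [habel]
            exact norm_add_le _ _
      _ ≤ δ * ‖y‖ + Kn * ‖y‖ := add_le_add hx_err hNAyb
      _ = (Kn + δ) * ‖y‖ := by ring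
    have h2 : (Kn + δ) * ‖y‖ < (Kn + δ) * (1/t) :=
      mul_lt_mul_of_pos_left hy2 (by linarith only [hKn, hδ])
    have h3 : (Kn + δ) * (1/t) ≤ 1/s := by
      rw [mul_one_div, div_le_div_iff₀ ht0 hs0]
      nlinarith only [hts, hs0]
    linarith only [h1, h2, h3]
  · intro i hi
    rw [hxi i, hxnorm, abs_mul, abs_of_pos hy0]
    nlinarith only [mul_lt_mul_of_pos_left hsε hy0, mul_le_mul_of_nonneg_left (hvi i hi) hy0.le,
      sq_nonneg s, hy0.le, abs_nonneg (v i)]
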